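/- Fix p > 2 and let X_n be the span of the first n unit vectors of l_p (X_0 = {0}). Then the bidual K(X_n) of the Bellenot space J(X_n) does not contain a subspace isomorphic to l_p. More precisely, if (g_k) is a sequence in K(X_n) of the disjointly supported eventually-constant form g_k = (0,...,0, x_{n(k-1)+2}^{m(k)}, ..., x_{n(k)-1}^{m(k)}, x^{m(k)}, x^{m(k)}, ...), then for all scalars (a_k): 2||sum_{k=1}^r a_k g_k||_K^2 ≥ sum_{k=1}^r a_k^2 ||g_k||_K^2, and hence (g_k) cannot be equivalent to the unit vector basis of l_p when inf_k ||g_k||_K > 0, since p > 2. -/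

import Mathlib

open Finset

/-- Square of the Bellenot `J`-norm. -/
noncomputable def jnormSq {E : Type*} [SeminormedAddCommGroup E] (x : ℕ → E) : ℝ :=
  sSup {r : ℝ | ∃ (k : ℕ) (P : ℕ → ℕ), 0 < k ∧ StrictMono P ∧
    r = (∑ i ∈ range (k - 1), ‖x (P i) - x (P (i + 1))‖ ^ 2) + ‖x (P (k - 1))‖ ^ 2}

/-- The Bellenot `J`-norm. -/
noncomputable def jnorm {E : Type*} [SeminormedAddCommGroup E] (x : ℕ → E) : ℝ :=
  Real.sqrt (jnormSq x / 2)

/-- The `K`-norm: `‖(x i)‖_K = sup_n ‖(x 0, …, x n, 0, 0, …)‖_J`. -/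
noncomputable def knorm {E : Type*} [SeminormedAddCommGroup E] (x : ℕ → E) : ℝ :=
  ⨆ n : ℕ, jnorm (fun k => if k ≤ n then x k else 0)

section Aux
variable {E : Type*} [SeminormedAddCommGroup E]

/-- The set whose sup is `jnormSq`. -/
def jset (x : ℕ → E) : Set ℝ :=
  {r : ℝ | ∃ (k : ℕ) (P : ℕ → ℕ), 0 < k ∧ StrictMono P ∧
    r = (∑ i ∈ range (k - 1), ‖x (P i) - x (P (i + 1))‖ ^ 2) + ‖x (P (k - 1))‖ ^ 2}

lemma jnormSq_eq (x : ℕ → E) : jnormSq x = sSup (jset x) := rfl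

noncomputable def trunc (x : ℕ → E) (N : ℕ) : ℕ → E := fun k => if k ≤ N then x k else 0

lemma knorm_eq (x : ℕ → E) : knorm x = ⨆ N : ℕ, jnorm (trunc x N) := rfl

lemma jnorm_nonneg (x : ℕ → E) : 0 ≤ jnorm x := Real.sqrt_nonneg _

lemma knorm_nonneg (x : ℕ → E) : 0 ≤ knorm x := Real.iSup_nonneg fun _ => jnorm_nonneg _

lemma mem_jset_zero (x : ℕ → E) : ‖x 0‖ ^ 2 ∈ jset x :=
  ⟨1, id, one_pos, strictMono_id, by simp⟩

/-- telescoping estimate -/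
lemma tel_norm (x : ℕ → E) : ∀ b a, a ≤ b → ‖x a - x b‖ ≤ ∑ j ∈ Finset.Ico a b, ‖x j - x (j + 1)‖ := by
  intro b
  induction b with
  | zero => intro a ha; interval_cases a; simp
  | succ b ih =>
    intro a ha
    rcases Nat.lt_succ_iff_lt_or_eq.1 (Nat.lt_succ_of_le ha) with h | h
    · have h' : a ≤ b := Nat.lt_succ_iff.1 h
      rw [Finset.sum_Ico_succ_top h']
      calc ‖x a - x (b+1)‖ ≤ ‖x a - x b‖ + ‖x b - x (b+1)‖ := norm_sub_le_norm_sub_add_norm_sub _ _ _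
        _ ≤ (∑ j ∈ Finset.Ico a b, ‖x j - x (j + 1)‖) + ‖x b - x (b+1)‖ :=
          add_le_add (ih a h') le_rfl
    · subst h; simp

/-- chain variation estimate -/
lemma chain_var (x : ℕ → E) (P : ℕ → ℕ) (hP : StrictMono P) :
    ∀ m, ∑ i ∈ range m, ‖x (P i) - x (P (i + 1))‖ ≤
      ∑ j ∈ Finset.Ico (P 0) (P m), ‖x j - x (j + 1)‖ := by
  intro m
  induction m with
  | zero => simp
  | succ m ih =>
    rw [Finset.sum_range_succ,
      ← Finset.sum_Ico_consecutive _ (hP.monotone (Nat.zero_le m)) (hP.monotone (Nat.le_succ m))]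
    exact add_le_add ih (tel_norm x _ _ (hP.monotone (Nat.le_succ m)))

lemma sum_sq_le_sq_sum (s : Finset ℕ) (f : ℕ → ℝ) (hf : ∀ i ∈ s, 0 ≤ f i) :
    ∑ i ∈ s, f i ^ 2 ≤ (∑ i ∈ s, f i) ^ 2 := by
  rw [sq (∑ i ∈ s, f i), Finset.sum_mul]
  refine Finset.sum_le_sum fun i hi => ?_
  rw [sq]
  exact mul_le_mul_of_nonneg_left (Finset.single_le_sum hf hi) (hf i hi)

/-- sums of a nonneg function vanishing beyond `K` -/
lemma sum_range_le_of_vanish {h : ℕ → ℝ} {K : ℕ} (hnn : ∀ j, 0 ≤ h j)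
    (hv : ∀ j, K ≤ j → h j = 0) (M : ℕ) : ∑ j ∈ range M, h j ≤ ∑ j ∈ range K, h j := by
  rcases le_total M K with hMK | hMK
  · exact Finset.sum_le_sum_of_subset_of_nonneg (Finset.range_subset_range.2 hMK) fun j _ _ => hnn j
  · rw [← Finset.sum_subset (Finset.range_subset_range.2 hMK)
      (fun j _ hj => hv j (Nat.le_of_not_lt (fun hlt => hj (Finset.mem_range.2 hlt))))]

/-- every element of `jset` is bounded by twice the squared variation -/
lemma jset_le_of_var (x : ℕ → E) (B : ℝ)
    (hB : ∀ M, ∑ j ∈ range M, ‖x j - x (j + 1)‖ ≤ B) (h0 : x 0 = 0) :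
    ∀ s ∈ jset x, s ≤ 2 * B ^ 2 := by
  rintro s ⟨k, P, hk, hP, rfl⟩
  have hB0 : 0 ≤ B := le_trans (by simp) (hB 0)
  have h1 : ∑ i ∈ range (k - 1), ‖x (P i) - x (P (i + 1))‖ ^ 2 ≤ B ^ 2 := by
    refine le_trans (sum_sq_le_sq_sum _ _ fun i _ => norm_nonneg _) ?_
    have h2 : ∑ i ∈ range (k - 1), ‖x (P i) - x (P (i + 1))‖ ≤ B := by
      refine le_trans (chain_var x P hP (k - 1)) (le_trans ?_ (hB (P (k - 1))))
      exact Finset.sum_le_sum_of_subset_of_nonneg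
        (by rw [Finset.range_eq_Ico]; exact Finset.Ico_subset_Ico (Nat.zero_le _) le_rfl)
        fun j _ _ => norm_nonneg _
    exact pow_le_pow_left₀ (Finset.sum_nonneg fun i _ => norm_nonneg _) h2 2
  have h3 : ‖x (P (k - 1))‖ ≤ B := by
    have := tel_norm x (P (k - 1)) 0 (Nat.zero_le _)
    rw [h0] at this
    simp only [zero_sub, norm_neg] at this
    refine le_trans this (le_trans ?_ (hB (P (k-1))))
    rw [Finset.range_eq_Ico]
  have h4 : ‖x (P (k - 1))‖ ^ 2 ≤ B ^ 2 := pow_le_pow_left₀ (norm_nonneg _) h3 2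
  linarith [h1, h4]

lemma trunc_var (x : ℕ → E) (N M : ℕ) :
    ∑ j ∈ range M, ‖trunc x N j - trunc x N (j + 1)‖ ≤
      (∑ j ∈ range N, ‖x j - x (j + 1)‖) + ‖x N‖ := by
  set h : ℕ → ℝ := fun j => if j < N then ‖x j - x (j + 1)‖ else if j = N then ‖x N‖ else 0 with hh
  have hnn : ∀ j, 0 ≤ h j := by
    intro j; simp only [hh]; split <;> [exact norm_nonneg _; split <;> [exact norm_nonneg _; rfl]]
  have hterm : ∀ j, ‖trunc x N j - trunc x N (j + 1)‖ ≤ h j := by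
    intro j
    simp only [trunc, hh]
    rcases lt_trichotomy j N with hj | hj | hj
    · rw [if_pos hj.le, if_pos hj, if_pos (Nat.succ_le_of_lt hj)]
    · subst hj; rw [if_pos le_rfl, if_neg (by omega), if_neg (lt_irrefl _), if_pos rfl, sub_zero]
    · rw [if_neg (by omega), if_neg (by omega), if_neg (by omega), if_neg (by omega), sub_zero,
        norm_zero]
  calc ∑ j ∈ range M, ‖trunc x N j - trunc x N (j + 1)‖ ≤ ∑ j ∈ range M, h j :=
        Finset.sum_le_sum fun j _ => hterm j
    _ ≤ ∑ j ∈ range (N + 1), h j :=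
        sum_range_le_of_vanish hnn (fun j hj => by simp only [hh]; rw [if_neg (by omega), if_neg (by omega)]) M
    _ = (∑ j ∈ range N, ‖x j - x (j + 1)‖) + ‖x N‖ := by
        rw [Finset.sum_range_succ]
        congr 1
        · exact Finset.sum_congr rfl fun j hj => by
            simp only [hh]; rw [if_pos (Finset.mem_range.1 hj)]
        · simp [hh]

lemma sum_range_add' {M : Type*} [AddCommMonoid M] (f : ℕ → M) (a : ℕ) :
    ∀ b, ∑ i ∈ range (a + b), f i = (∑ i ∈ range a, f i) + ∑ i ∈ range b, f (a + i) := by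
  intro b
  induction b with
  | zero => simp
  | succ b ih => rw [← Nat.add_assoc, Finset.sum_range_succ, ih, Finset.sum_range_succ, add_assoc]
end Aux

section Aux2
variable {E : Type*} [SeminormedAddCommGroup E]

lemma jset_nonempty (x : ℕ → E) : (jset x).Nonempty := ⟨_, mem_jset_zero x⟩

lemma jnormSq_le_of_var (x : ℕ → E) (B : ℝ)
    (hB : ∀ M, ∑ j ∈ range M, ‖x j - x (j + 1)‖ ≤ B) (h0 : x 0 = 0) :
    jnormSq x ≤ 2 * B ^ 2 := by
  rw [jnormSq_eq]
  exact Real.sSup_le (jset_le_of_var x B hB h0) (by positivity)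

lemma jset_bddAbove_of_var (x : ℕ → E) (B : ℝ)
    (hB : ∀ M, ∑ j ∈ range M, ‖x j - x (j + 1)‖ ≤ B) (h0 : x 0 = 0) :
    BddAbove (jset x) := ⟨2 * B ^ 2, jset_le_of_var x B hB h0⟩

lemma jnormSq_nonneg_of_var (x : ℕ → E) (B : ℝ)
    (hB : ∀ M, ∑ j ∈ range M, ‖x j - x (j + 1)‖ ≤ B) (h0 : x 0 = 0) :
    0 ≤ jnormSq x := by
  have := le_csSup (jset_bddAbove_of_var x B hB h0) (mem_jset_zero x)
  rw [h0] at this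
  simpa [jnormSq_eq] using this

lemma jnorm_sq_eq_of_var (x : ℕ → E) (B : ℝ)
    (hB : ∀ M, ∑ j ∈ range M, ‖x j - x (j + 1)‖ ≤ B) (h0 : x 0 = 0) :
    jnorm x ^ 2 = jnormSq x / 2 := by
  rw [jnorm, Real.sq_sqrt (by linarith [jnormSq_nonneg_of_var x B hB h0])]

lemma jnorm_le_of_var (x : ℕ → E) (B : ℝ)
    (hB : ∀ M, ∑ j ∈ range M, ‖x j - x (j + 1)‖ ≤ B) (h0 : x 0 = 0) (hB0 : 0 ≤ B) :
    jnorm x ≤ B := by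
  rw [jnorm]
  have h1 : jnormSq x / 2 ≤ B ^ 2 := by linarith [jnormSq_le_of_var x B hB h0]
  calc Real.sqrt (jnormSq x / 2) ≤ Real.sqrt (B ^ 2) := Real.sqrt_le_sqrt h1
    _ = B := Real.sqrt_sq hB0

lemma trunc_zero' (x : ℕ → E) (N : ℕ) (h0 : x 0 = 0) : trunc x N 0 = 0 := by
  simp [trunc, h0]

lemma exists_trunc_lt (x : ℕ → E) (t : ℝ) (h : t < knorm x) :
    ∃ N, t < jnorm (trunc x N) := by
  rw [knorm_eq] at h
  exact exists_lt_of_lt_ciSup h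

/-- Dedup: a monotone chain of indices can be replaced by a strictly monotone one with the
same endpoints and at least the same squared-difference sum. -/
lemma dedup (f : ℕ → E) :
    ∀ (mlen : ℕ) (c : ℕ → ℕ), (∀ i j, i ≤ j → j ≤ mlen → c i ≤ c j) →
    ∃ (m : ℕ) (Q : ℕ → ℕ), StrictMono Q ∧ Q 0 = c 0 ∧ Q m = c mlen ∧
      ∑ i ∈ range mlen, ‖f (c i) - f (c (i + 1))‖ ^ 2 ≤
        ∑ i ∈ range m, ‖f (Q i) - f (Q (i + 1))‖ ^ 2 := by
  intro mlen
  induction mlen with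
  | zero =>
    intro c _
    exact ⟨0, fun j => c 0 + j, strictMono_nat_of_lt_succ (fun i => by omega), by simp, by simp,
      by simp⟩
  | succ mlen ih =>
    intro c hc
    obtain ⟨m, Q, hQ, hQ0, hQm, hsum⟩ := ih c (fun i j hij hj => hc i j hij (Nat.le_succ_of_le hj))
    rcases eq_or_lt_of_le (hc mlen (mlen + 1) (Nat.le_succ _) le_rfl) with he | hlt
    · refine ⟨m, Q, hQ, hQ0, by rw [hQm, he], ?_⟩
      rw [Finset.sum_range_succ, ← he]
      simpa using hsum
    · refine ⟨m + 1, fun i => if i ≤ m then Q i else c (mlen + 1) + (i - m - 1), ?_, ?_, ?_, ?_⟩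
      · refine strictMono_nat_of_lt_succ fun i => ?_
        rcases lt_trichotomy i m with hi | hi | hi
        · rw [if_pos hi.le, if_pos (show i + 1 ≤ m from hi)]
          exact hQ (Nat.lt_succ_self i)
        · subst hi
          rw [if_pos le_rfl, if_neg (by omega)]
          have : Q i ≤ c mlen := by rw [hQm]
          omega
        · rw [if_neg (by omega), if_neg (by omega)]
          omega
      · simpa using hQ0
      · have hmm : ¬ (m + 1 ≤ m) := by omega
        simp [hmm]
      · rw [Finset.sum_range_succ]
        have h1 : ∀ i ∈ range m, ‖f ((fun i => if i ≤ m then Q i else c (mlen + 1) + (i - m - 1)) i) -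
            f ((fun i => if i ≤ m then Q i else c (mlen + 1) + (i - m - 1)) (i + 1))‖ ^ 2 =
            ‖f (Q i) - f (Q (i + 1))‖ ^ 2 := by
          intro i hi
          have hi' := Finset.mem_range.1 hi
          simp only [if_pos hi'.le, if_pos (Nat.succ_le_of_lt hi')]
        rw [Finset.sum_range_succ, Finset.sum_congr rfl h1]
        refine add_le_add hsum ?_
        simp only [if_pos le_rfl, if_neg (Nat.not_succ_le_self m)]
        rw [hQm]
        simp

lemma key (f : ℕ → E) (L R : ℕ) (hLR : L ≤ R) (h0 : ∀ i, i ≤ L → f i = 0)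
    (hc : ∀ i, R ≤ i → f i = f R) (t : ℝ) (ht : t < knorm f ^ 2) :
    ∃ (m : ℕ) (Q : ℕ → ℕ), StrictMono Q ∧ L ≤ Q 0 ∧ Q m ≤ R ∧
      t < ∑ i ∈ range m, ‖f (Q i) - f (Q (i + 1))‖ ^ 2 := by
  classical
  rcases lt_or_ge t 0 with htneg | ht0
  · exact ⟨0, fun j => L + j, strictMono_nat_of_lt_succ (fun i => by omega), by simp,
      by simpa using hLR, by simpa using htneg⟩
  have hkn : Real.sqrt t < knorm f := by
    have h1 : Real.sqrt t < Real.sqrt (knorm f ^ 2) := Real.sqrt_lt_sqrt ht0 ht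
    rwa [Real.sqrt_sq (knorm_nonneg f)] at h1
  obtain ⟨N, hN⟩ := exists_trunc_lt f _ hkn
  set y := trunc f N with hy
  set B := (∑ j ∈ range N, ‖f j - f (j + 1)‖) + ‖f N‖ with hBdef
  have hvar : ∀ M, ∑ j ∈ range M, ‖y j - y (j + 1)‖ ≤ B := fun M => trunc_var f N M
  have hy0 : y 0 = 0 := trunc_zero' f N (h0 0 (Nat.zero_le L))
  have hbdd := jset_bddAbove_of_var y B hvar hy0
  have h2t : 2 * t < jnormSq y := by
    have h1 : t < jnorm y ^ 2 := by
      have h2 : Real.sqrt t ^ 2 < jnorm y ^ 2 :=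
        pow_lt_pow_left₀ hN (Real.sqrt_nonneg t) (by norm_num)
      rwa [Real.sq_sqrt ht0] at h2
    have h3 := jnorm_sq_eq_of_var y B hvar hy0
    rw [h3] at h1; linarith
  rw [jnormSq_eq] at h2t
  obtain ⟨S, hSmem, hS⟩ := exists_lt_of_lt_csSup (jset_nonempty y) h2t
  obtain ⟨k, P, hk, hP, rfl⟩ := hSmem
  have hPge : ∀ i, i ≤ P i := fun i => hP.le_apply
  have hex : ∃ i, N < P i := ⟨N + 1, lt_of_lt_of_le (Nat.lt_succ_self N) (hPge (N + 1))⟩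
  set i₀ := Nat.find hex with hi₀def
  have hi₀spec : N < P i₀ := Nat.find_spec hex
  have hlt : ∀ i, i < i₀ → P i ≤ N := fun i hi => Nat.not_lt.1 (Nat.find_min hex hi)
  have hyPz : ∀ i, i₀ ≤ i → y (P i) = 0 := by
    intro i hi
    have h1 : N < P i := lt_of_lt_of_le hi₀spec (hP.monotone hi)
    simp only [hy, trunc]
    rw [if_neg (Nat.not_le.2 h1)]
  have hi₀pos : 0 < i₀ := by
    rcases Nat.eq_zero_or_pos i₀ with h | h
    · exfalso
      have hz : ∀ i, y (P i) = 0 := fun i => hyPz i (by omega)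
      rw [Finset.sum_eq_zero (fun i _ => by rw [hz, hz]; simp), hz (k - 1)] at hS
      simp at hS; linarith
    · exact h
  set m₀ := min i₀ k with hm₀def
  have hm₀pos : 0 < m₀ := lt_min hi₀pos hk
  have hSred : 2 * t < (∑ i ∈ range (m₀ - 1), ‖y (P i) - y (P (i + 1))‖ ^ 2)
      + ‖y (P (m₀ - 1))‖ ^ 2 := by
    rcases le_or_gt k i₀ with hcase | hcase
    · have hkk : m₀ = k := min_eq_right hcase
      rw [hkk]; exact hS
    · have hmeq : m₀ = i₀ := min_eq_left hcase.le
      rw [hmeq]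
      have hlast : y (P (k - 1)) = 0 := hyPz _ (by omega)
      have h1 : i₀ - 1 ≤ k - 1 := by omega
      have h2 : i₀ ≤ k - 1 := by omega
      have hIco : Finset.Ico (i₀ - 1) i₀ = {i₀ - 1} := by
        ext j; simp only [Finset.mem_Ico, Finset.mem_singleton]; omega
      have hz2 : ∑ i ∈ Finset.Ico i₀ (k - 1), ‖y (P i) - y (P (i + 1))‖ ^ 2 = 0 :=
        Finset.sum_eq_zero (fun i hi => by
          have hi' := (Finset.mem_Ico.1 hi).1
          rw [hyPz i hi', hyPz (i + 1) (by omega)]; simp)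
      have hsplit : ∑ i ∈ range (k - 1), ‖y (P i) - y (P (i + 1))‖ ^ 2
          = (∑ i ∈ range (i₀ - 1), ‖y (P i) - y (P (i + 1))‖ ^ 2) + ‖y (P (i₀ - 1))‖ ^ 2 := by
        rw [Finset.range_eq_Ico, ← Finset.sum_Ico_consecutive _ (Nat.zero_le (i₀ - 1)) h1,
          ← Finset.sum_Ico_consecutive _ (show i₀ - 1 ≤ i₀ by omega) h2, hIco, hz2, add_zero]
        rw [Finset.sum_singleton, show (i₀ - 1) + 1 = i₀ by omega, hyPz i₀ le_rfl, sub_zero]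
        rw [Finset.range_eq_Ico]
      rw [hsplit, hlast] at hS
      simpa using hS
  set c : ℕ → ℕ := fun i => max L (min (P (min i (m₀ - 1))) R) with hcdef
  have hcL : ∀ i, L ≤ c i := fun i => le_max_left _ _
  have hcR : ∀ i, c i ≤ R := fun i => max_le hLR (min_le_right _ _)
  have hfL : f L = 0 := h0 L le_rfl
  have hval : ∀ i, i ≤ m₀ - 1 → y (P i) = f (c i) := by
    intro i hi
    have hPN : P i ≤ N := hlt i (by omega)
    have hyi : y (P i) = f (P i) := by simp only [hy, trunc]; rw [if_pos hPN]
    have hci : c i = max L (min (P i) R) := by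
      simp only [hcdef]; rw [min_eq_left hi]
    rw [hyi, hci]
    rcases le_total (P i) L with h1 | h1
    · rw [h0 _ h1, min_eq_left (h1.trans hLR), max_eq_left h1, hfL]
    · rcases le_total (P i) R with h2 | h2
      · rw [min_eq_left h2, max_eq_right h1]
      · rw [min_eq_right h2, max_eq_right hLR, hc _ h2]
  have hcmono : ∀ i j, i ≤ j → j ≤ m₀ - 1 → c i ≤ c j := by
    intro i j hij hj
    have h1 : P (min i (m₀ - 1)) ≤ P (min j (m₀ - 1)) := hP.monotone (by omega)
    exact max_le_max le_rfl (min_le_min h1 le_rfl)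
  have hA : ∑ i ∈ range (m₀ - 1), ‖y (P i) - y (P (i + 1))‖ ^ 2
      = ∑ i ∈ range (m₀ - 1), ‖f (c i) - f (c (i + 1))‖ ^ 2 :=
    Finset.sum_congr rfl fun i hi => by
      have hi' := Finset.mem_range.1 hi
      rw [hval i (by omega), hval (i + 1) (by omega)]
  have hlastval : y (P (m₀ - 1)) = f (c (m₀ - 1)) := hval _ le_rfl
  rw [hA, hlastval] at hSred
  rcases le_or_gt (‖f (c (m₀ - 1))‖ ^ 2) t with hBle | hBgt
  · have hAgt : t < ∑ i ∈ range (m₀ - 1), ‖f (c i) - f (c (i + 1))‖ ^ 2 := by linarith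
    obtain ⟨m, Q, hQ, hQ0, hQm, hQsum⟩ := dedup f (m₀ - 1) c hcmono
    exact ⟨m, Q, hQ, by rw [hQ0]; exact hcL 0, by rw [hQm]; exact hcR _,
      lt_of_lt_of_le hAgt hQsum⟩
  · have hd : L < c (m₀ - 1) := by
      rcases lt_or_eq_of_le (hcL (m₀ - 1)) with h1 | h1
      · exact h1
      · exfalso; rw [← h1, hfL] at hBgt; simp at hBgt; linarith
    refine ⟨1, fun j => if j = 0 then L else c (m₀ - 1) + (j - 1), ?_, ?_, ?_, ?_⟩
    · refine strictMono_nat_of_lt_succ fun i => ?_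
      show (if i = 0 then L else c (m₀ - 1) + (i - 1)) <
        (if i + 1 = 0 then L else c (m₀ - 1) + (i + 1 - 1))
      rcases Nat.eq_zero_or_pos i with h | h
      · subst h; simp; omega
      · rw [if_neg (by omega), if_neg (by omega)]; omega
    · simp
    · show (if (1 : ℕ) = 0 then L else c (m₀ - 1) + (1 - 1)) ≤ R
      simpa using hcR (m₀ - 1)
    · rw [Finset.sum_range_one]
      show t < ‖f (if (0 : ℕ) = 0 then L else c (m₀ - 1) + (0 - 1))
        - f (if (1 : ℕ) = 0 then L else c (m₀ - 1) + (1 - 1))‖ ^ 2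
      have e0 : (if (0 : ℕ) = 0 then L else c (m₀ - 1) + (0 - 1)) = L := by norm_num
      have e1 : (if (1 : ℕ) = 0 then L else c (m₀ - 1) + (1 - 1)) = c (m₀ - 1) := by norm_num
      rw [e0, e1, hfL, zero_sub, norm_neg]
      exact hBgt

end Aux2


/-- Fix `p > 2` and `X n` the span of the first `n` unit vectors of
`ℓ_p`.  If `(g k)` is a sequence of elements of `K(X n)` of the disjointly supported
eventually constant form `g k = (0, …, 0, x^{m k}_{n(k-1)+2}, …, x^{m k}_{n k − 1},
x^{m k}, x^{m k}, …)`, then `2 ‖∑ a k • g k‖_K² ≥ ∑ a k² ‖g k‖_K²`; hence, when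
`inf_k ‖g k‖_K > 0`, the sequence `(g k)` is not equivalent to the unit vector
basis of `ℓ_p` (since `p > 2`). -/
theorem bellenot_bidual_no_lp_copy
    (p : ℝ) (hp : 2 < p) [Fact (1 ≤ ENNReal.ofReal p)]
    (g : ℕ → ℕ → lp (fun _ : ℕ => ℝ) (ENNReal.ofReal p))
    -- the entries of each `g k` lie in the corresponding `X i`:
    (hmem : ∀ k i j, i ≤ j → (g k i : ∀ _ : ℕ, ℝ) j = 0)
    (n : ℕ → ℕ) (hn : StrictMono n)
    -- `g k` vanishes up to index `n (k-1) + 1`: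
    (hsupp : ∀ k, 1 ≤ k → ∀ i, i ≤ n (k - 1) + 1 → g k i = 0)
    -- `g k` is eventually constant from index `n k` on:
    (hconst : ∀ k, 1 ≤ k → ∀ i, n k ≤ i → g k i = g k (n k)) :
    (∀ (r : ℕ) (a : ℕ → ℝ),
      ∑ k ∈ Icc 1 r, (a k) ^ 2 * (knorm (g k)) ^ 2 ≤
        2 * (knorm (fun i => ∑ k ∈ Icc 1 r, a k • g k i)) ^ 2) ∧
    ((∃ ε : ℝ, 0 < ε ∧ ∀ k, 1 ≤ k → ε ≤ knorm (g k)) →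
      ¬ ∃ c C : ℝ, 0 < c ∧ ∀ (r : ℕ) (a : ℕ → ℝ),
        c * (∑ k ∈ Icc 1 r, |a k| ^ p) ^ (1 / p) ≤
            knorm (fun i => ∑ k ∈ Icc 1 r, a k • g k i) ∧
          knorm (fun i => ∑ k ∈ Icc 1 r, a k • g k i) ≤
            C * (∑ k ∈ Icc 1 r, |a k| ^ p) ^ (1 / p)) := by
  classical
  have part1 : ∀ (r : ℕ) (a : ℕ → ℝ),
      ∑ k ∈ Icc 1 r, (a k) ^ 2 * (knorm (g k)) ^ 2 ≤
        2 * (knorm (fun i => ∑ k ∈ Icc 1 r, a k • g k i)) ^ 2 := by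
    intro r a
    set G : ℕ → lp (fun _ : ℕ => ℝ) (ENNReal.ofReal p) :=
      fun i => ∑ k ∈ Icc 1 r, a k • g k i with hGdef
    have hg0 : ∀ k, 1 ≤ k → g k 0 = 0 := fun k hk => hsupp k hk 0 (Nat.zero_le _)
    have hG0 : G 0 = 0 := by
      simp only [hGdef]
      exact Finset.sum_eq_zero fun k hk => by
        rw [hg0 k (Finset.mem_Icc.1 hk).1, smul_zero]
    have hGconst : ∀ i, n r ≤ i → G i = G (n r) := by
      intro i hi
      simp only [hGdef]
      refine Finset.sum_congr rfl fun k hk => ?_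
      obtain ⟨hk1, hk2⟩ := Finset.mem_Icc.1 hk
      rw [hconst k hk1 i (le_trans (hn.monotone hk2) hi), hconst k hk1 (n r) (hn.monotone hk2)]
    set B₀ := ∑ j ∈ range (n r), ‖G j - G (j + 1)‖ with hB₀def
    have hB₀nn : (0:ℝ) ≤ B₀ := Finset.sum_nonneg fun j _ => norm_nonneg _
    have hGvar : ∀ M, ∑ j ∈ range M, ‖G j - G (j + 1)‖ ≤ B₀ := by
      intro M
      refine sum_range_le_of_vanish (fun j => norm_nonneg _) ?_ M
      intro j hj
      rw [hGconst j hj, hGconst (j + 1) (by omega), sub_self, norm_zero]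
    have hGN : ∀ N, ‖G N‖ ≤ B₀ := by
      intro N
      have h1 := tel_norm G N 0 (Nat.zero_le N)
      rw [hG0, zero_sub, norm_neg] at h1
      refine h1.trans ?_
      rw [← Finset.range_eq_Ico]
      exact hGvar N
    have htruncvar : ∀ N M, ∑ j ∈ range M, ‖trunc G N j - trunc G N (j + 1)‖ ≤ 2 * B₀ := by
      intro N M
      refine (trunc_var G N M).trans ?_
      have h1 := hGvar N
      have h2 := hGN N
      linarith
    have hjb : ∀ N, BddAbove (jset (trunc G N)) := fun N =>
      jset_bddAbove_of_var _ (2 * B₀) (htruncvar N) (trunc_zero' G N hG0)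
    have hknbdd : BddAbove (Set.range fun N => jnorm (trunc G N)) := by
      refine ⟨2 * B₀, ?_⟩
      rintro x ⟨N, rfl⟩
      exact jnorm_le_of_var _ (2 * B₀) (htruncvar N) (trunc_zero' G N hG0) (by linarith)
    have hjle : ∀ N, jnorm (trunc G N) ≤ knorm G := fun N => by
      rw [knorm_eq]; exact le_ciSup hknbdd N
    have hblock : ∀ k, k ∈ Icc 1 r → ∀ i j, n (k - 1) + 1 ≤ i → i ≤ n k →
        n (k - 1) + 1 ≤ j → j ≤ n k →
        ‖G i - G j‖ ^ 2 = (a k) ^ 2 * ‖g k i - g k j‖ ^ 2 := by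
      intro k hk i j hi1 hi2 hj1 hj2
      obtain ⟨hk1, hk2⟩ := Finset.mem_Icc.1 hk
      have heq : G i - G j = a k • (g k i - g k j) := by
        simp only [hGdef]
        rw [← Finset.sum_sub_distrib]
        have hsingle : ∀ b ∈ Icc 1 r, b ≠ k → a b • g b i - a b • g b j = 0 := by
          intro b hb hbk
          obtain ⟨hb1, hb2⟩ := Finset.mem_Icc.1 hb
          rcases lt_or_gt_of_ne hbk with hbl | hbg
          · have hbn : n b ≤ n (k - 1) := hn.monotone (by omega)
            rw [hconst b hb1 i (by omega), hconst b hb1 j (by omega), sub_self]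
          · have hbn : n k ≤ n (b - 1) := hn.monotone (by omega)
            rw [hsupp b hb1 i (by omega), hsupp b hb1 j (by omega), sub_self]
        rw [Finset.sum_eq_single_of_mem k hk hsingle, smul_sub]
      rw [heq, norm_smul, mul_pow, Real.norm_eq_abs, sq_abs]
    have main : ∀ ε : ℝ, 0 < ε →
        ∑ k ∈ Icc 1 r, (a k) ^ 2 * ((knorm (g k)) ^ 2 - ε) ≤ 2 * knorm G ^ 2 := by
      intro ε hε
      have concat : ∀ ρ, ρ ≤ r → ∃ (M : ℕ) (P : ℕ → ℕ), StrictMono P ∧ P M ≤ n ρ ∧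
          (∑ k ∈ Icc 1 ρ, (a k) ^ 2 * ((knorm (g k)) ^ 2 - ε)) ≤
            ∑ i ∈ range M, ‖G (P i) - G (P (i + 1))‖ ^ 2 := by
        intro ρ hρ
        induction ρ with
        | zero => exact ⟨0, id, strictMono_id, Nat.zero_le _, by simp⟩
        | succ ρ ih =>
          obtain ⟨M, P, hPm, hPM, hPsum⟩ := ih (by omega)
          have hk1 : (1:ℕ) ≤ ρ + 1 := by omega
          have hLR : n ρ + 1 ≤ n (ρ + 1) := hn (Nat.lt_succ_self ρ)
          have hsupp' : ∀ i, i ≤ n ρ + 1 → g (ρ + 1) i = 0 := by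
            intro i hi
            refine hsupp (ρ + 1) hk1 i ?_
            simpa using hi
          have hconst' : ∀ i, n (ρ + 1) ≤ i → g (ρ + 1) i = g (ρ + 1) (n (ρ + 1)) :=
            fun i hi => hconst (ρ + 1) hk1 i hi
          obtain ⟨m', Q, hQm, hQ0, hQlast, hQsum⟩ := key (g (ρ + 1)) (n ρ + 1) (n (ρ + 1)) hLR
            hsupp' hconst' ((knorm (g (ρ + 1))) ^ 2 - ε) (by linarith)
          set P' : ℕ → ℕ := fun i => if i ≤ M then P i else Q (i - (M + 1)) with hP'def
          have hP'P : ∀ i, i ≤ M → P' i = P i := fun i hi => by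
            simp only [hP'def]; rw [if_pos hi]
          have hP'Q : ∀ i, P' (M + 1 + i) = Q i := fun i => by
            simp only [hP'def]; rw [if_neg (by omega), show M + 1 + i - (M + 1) = i by omega]
          have hP'mono : StrictMono P' := by
            refine strictMono_nat_of_lt_succ fun i => ?_
            rcases lt_trichotomy i M with h | h | h
            · rw [hP'P i h.le, hP'P (i + 1) h]
              exact hPm (Nat.lt_succ_self i)
            · subst h
              have h0 := hP'Q 0
              rw [Nat.add_zero] at h0
              rw [hP'P i le_rfl, h0]
              omega
            · simp only [hP'def]
              rw [if_neg (by omega), if_neg (by omega)]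
              exact hQm (by omega)
          refine ⟨M + 1 + m', P', hP'mono, ?_, ?_⟩
          · rw [hP'Q m']
            exact hQlast
          · rw [Finset.sum_Icc_succ_top hk1]
            rw [sum_range_add' (fun i => ‖G (P' i) - G (P' (i + 1))‖ ^ 2) (M + 1) m']
            have hfirst : ∑ i ∈ range M, ‖G (P i) - G (P (i + 1))‖ ^ 2 ≤
                ∑ i ∈ range (M + 1), ‖G (P' i) - G (P' (i + 1))‖ ^ 2 := by
              rw [Finset.sum_range_succ]
              have he : ∑ i ∈ range M, ‖G (P' i) - G (P' (i + 1))‖ ^ 2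
                  = ∑ i ∈ range M, ‖G (P i) - G (P (i + 1))‖ ^ 2 :=
                Finset.sum_congr rfl fun i hi => by
                  have hi' := Finset.mem_range.1 hi
                  rw [hP'P i (by omega), hP'P (i + 1) (by omega)]
              rw [he]
              linarith [sq_nonneg ‖G (P' M) - G (P' (M + 1))‖]
            have hsecond : (a (ρ + 1)) ^ 2 * ((knorm (g (ρ + 1))) ^ 2 - ε) ≤
                ∑ i ∈ range m', ‖G (P' (M + 1 + i)) - G (P' (M + 1 + i + 1))‖ ^ 2 := by
              have he : ∀ i ∈ range m', ‖G (P' (M + 1 + i)) - G (P' (M + 1 + i + 1))‖ ^ 2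
                  = (a (ρ + 1)) ^ 2 * ‖g (ρ + 1) (Q i) - g (ρ + 1) (Q (i + 1))‖ ^ 2 := by
                intro i hi
                have hi' := Finset.mem_range.1 hi
                have e1 : M + 1 + i + 1 = M + 1 + (i + 1) := by omega
                rw [e1, hP'Q i, hP'Q (i + 1)]
                have hb1 : n ((ρ + 1) - 1) + 1 ≤ Q i := by
                  have := hQm.monotone (Nat.zero_le i)
                  simp only [Nat.add_sub_cancel]
                  omega
                have hb2 : Q i ≤ n (ρ + 1) := le_trans (hQm.monotone (by omega)) hQlast
                have hb3 : n ((ρ + 1) - 1) + 1 ≤ Q (i + 1) := by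
                  have := hQm.monotone (Nat.zero_le (i + 1))
                  simp only [Nat.add_sub_cancel]
                  omega
                have hb4 : Q (i + 1) ≤ n (ρ + 1) := le_trans (hQm.monotone (by omega)) hQlast
                exact hblock (ρ + 1) (Finset.mem_Icc.2 ⟨hk1, hρ⟩) _ _ hb1 hb2 hb3 hb4
              rw [Finset.sum_congr rfl he, ← Finset.mul_sum]
              exact mul_le_mul_of_nonneg_left hQsum.le (sq_nonneg _)
            exact add_le_add (hPsum.trans hfirst) hsecond
      obtain ⟨M, P, hPm, hPM, hPsum⟩ := concat r le_rfl
      set N₁ := P M with hN₁def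
      set y : ℕ → lp (fun _ : ℕ => ℝ) (ENNReal.ofReal p) := trunc G N₁ with hydef
      have hyval : ∀ i, i ≤ M → y (P i) = G (P i) := by
        intro i hi
        simp only [hydef, trunc]
        rw [if_pos (hPm.monotone hi)]
      set P'' : ℕ → ℕ := fun i => if i ≤ M then P i else N₁ + 1 + (i - (M + 1)) with hP''def
      have hP''P : ∀ i, i ≤ M → P'' i = P i := fun i hi => by
        simp only [hP''def]; rw [if_pos hi]
      have hP''top : P'' (M + 1) = N₁ + 1 := by
        simp only [hP''def]; rw [if_neg (by omega)]; omega
      have hP''mono : StrictMono P'' := by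
        refine strictMono_nat_of_lt_succ fun i => ?_
        rcases lt_trichotomy i M with h | h | h
        · rw [hP''P i h.le, hP''P (i + 1) h]
          exact hPm (Nat.lt_succ_self i)
        · subst h
          rw [hP''P i le_rfl, hP''top]
          omega
        · simp only [hP''def]
          rw [if_neg (by omega), if_neg (by omega)]
          omega
      have hytop : y (P'' (M + 1)) = 0 := by
        rw [hP''top]
        simp only [hydef, trunc]
        rw [if_neg (by omega)]
      have hval : (∑ i ∈ range (M + 2 - 1), ‖y (P'' i) - y (P'' (i + 1))‖ ^ 2)
          + ‖y (P'' (M + 2 - 1))‖ ^ 2 ∈ jset y := ⟨M + 2, P'', by omega, hP''mono, rfl⟩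
      have hsplit : (∑ i ∈ range (M + 2 - 1), ‖y (P'' i) - y (P'' (i + 1))‖ ^ 2)
          + ‖y (P'' (M + 2 - 1))‖ ^ 2 =
          (∑ i ∈ range M, ‖G (P i) - G (P (i + 1))‖ ^ 2)
            + ‖G (P M) - y (P'' (M + 1))‖ ^ 2 + ‖y (P'' (M + 1))‖ ^ 2 := by
        have e1 : M + 2 - 1 = M + 1 := by omega
        rw [e1, Finset.sum_range_succ]
        congr 2
        · refine Finset.sum_congr rfl fun i hi => ?_
          have hi' := Finset.mem_range.1 hi
          rw [hP''P i (by omega), hP''P (i + 1) (by omega), hyval i (by omega),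
            hyval (i + 1) (by omega)]
        · rw [hP''P M le_rfl, hyval M le_rfl]
      have hle1 : ∑ i ∈ range M, ‖G (P i) - G (P (i + 1))‖ ^ 2 ≤ jnormSq y := by
        refine le_trans ?_ (le_csSup (hjb N₁) hval)
        rw [hsplit]
        linarith [sq_nonneg ‖G (P M) - y (P'' (M + 1))‖, sq_nonneg ‖y (P'' (M + 1))‖]
      have hle2 : jnormSq y ≤ 2 * knorm G ^ 2 := by
        have e1 : jnorm y ^ 2 = jnormSq y / 2 :=
          jnorm_sq_eq_of_var y (2 * B₀) (htruncvar N₁) (trunc_zero' G N₁ hG0)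
        have e2 : jnorm y ≤ knorm G := hjle N₁
        have e3 : jnorm y ^ 2 ≤ knorm G ^ 2 := pow_le_pow_left₀ (jnorm_nonneg y) e2 2
        linarith
      exact hPsum.trans (hle1.trans hle2)
    by_contra hcon
    push_neg at hcon
    set SA := ∑ k ∈ Icc 1 r, (a k) ^ 2 with hSAdef
    have hSAnn : (0:ℝ) ≤ SA := Finset.sum_nonneg fun k _ => sq_nonneg _
    set D := ∑ k ∈ Icc 1 r, (a k) ^ 2 * (knorm (g k)) ^ 2 - 2 * knorm G ^ 2 with hDdef
    have hD : 0 < D := by simp only [hDdef]; linarith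
    set ε := D / (SA + 1) with hεdef
    have hεpos : 0 < ε := div_pos hD (by linarith)
    have h1 := main ε hεpos
    have h2 : ∑ k ∈ Icc 1 r, (a k) ^ 2 * ((knorm (g k)) ^ 2 - ε)
        = ∑ k ∈ Icc 1 r, (a k) ^ 2 * (knorm (g k)) ^ 2 - ε * SA := by
      rw [hSAdef, Finset.mul_sum, ← Finset.sum_sub_distrib]
      exact Finset.sum_congr rfl fun k _ => by ring
    rw [h2] at h1
    have h3 : D ≤ ε * SA := by simp only [hDdef]; linarith
    rw [hεdef, div_mul_eq_mul_div, le_div_iff₀ (by linarith : (0:ℝ) < SA + 1)] at h3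
    have hexp : D * (SA + 1) = D * SA + D := by ring
    linarith
  refine ⟨part1, ?_⟩
  rintro ⟨ε, hε, hεle⟩ ⟨c, C, hc, hbas⟩
  have master : ∀ r : ℕ, 1 ≤ r → ε ^ 2 * ((r:ℝ)) ^ (1 - 2 / p) ≤ 2 * C ^ 2 := by
    intro r hr
    have hp1 := part1 r (fun _ => (1:ℝ))
    set K := knorm (fun i => ∑ k ∈ Icc 1 r, (1:ℝ) • g k i) with hKdef
    have hKnn : 0 ≤ K := knorm_nonneg _
    have hlow : (r:ℝ) * ε ^ 2 ≤ ∑ k ∈ Icc 1 r, ((1:ℝ)) ^ 2 * (knorm (g k)) ^ 2 := by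
      have hterm : ∀ k ∈ Icc 1 r, ε ^ 2 ≤ ((1:ℝ)) ^ 2 * (knorm (g k)) ^ 2 := by
        intro k hk
        have hk1 := (Finset.mem_Icc.1 hk).1
        rw [one_pow, one_mul]
        exact pow_le_pow_left₀ hε.le (hεle k hk1) 2
      calc (r:ℝ) * ε ^ 2 = ∑ _k ∈ Icc 1 r, ε ^ 2 := by
            rw [Finset.sum_const, Nat.card_Icc]
            simp [nsmul_eq_mul]
        _ ≤ _ := Finset.sum_le_sum hterm
    have hsum1 : ∑ k ∈ Icc 1 r, |(1:ℝ)| ^ p = (r:ℝ) := by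
      have : ∀ k ∈ Icc 1 r, |(1:ℝ)| ^ p = 1 := by
        intro k _
        rw [abs_one, Real.one_rpow]
      rw [Finset.sum_congr rfl this, Finset.sum_const, Nat.card_Icc]
      simp
    have hup : K ≤ C * ((r:ℝ)) ^ (1 / p) := by
      have := (hbas r (fun _ => (1:ℝ))).2
      rwa [hsum1] at this
    have hr0 : (0:ℝ) < (r:ℝ) := by exact_mod_cast hr
    have hsq : K ^ 2 ≤ C ^ 2 * ((r:ℝ)) ^ (2 / p) := by
      have h1 : K ^ 2 ≤ (C * ((r:ℝ)) ^ (1 / p)) ^ 2 := pow_le_pow_left₀ hKnn hup 2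
      have h2 : (((r:ℝ)) ^ (1 / p)) ^ 2 = ((r:ℝ)) ^ (2 / p) := by
        rw [← Real.rpow_natCast (((r:ℝ)) ^ (1 / p)) 2, ← Real.rpow_mul hr0.le]
        congr 1
        push_cast
        ring
      calc K ^ 2 ≤ (C * ((r:ℝ)) ^ (1 / p)) ^ 2 := h1
        _ = C ^ 2 * (((r:ℝ)) ^ (1 / p)) ^ 2 := by ring
        _ = C ^ 2 * ((r:ℝ)) ^ (2 / p) := by rw [h2]
    have hmain : ε ^ 2 * (r:ℝ) ≤ 2 * C ^ 2 * ((r:ℝ)) ^ (2 / p) := by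
      calc ε ^ 2 * (r:ℝ) = (r:ℝ) * ε ^ 2 := by ring
        _ ≤ ∑ k ∈ Icc 1 r, ((1:ℝ)) ^ 2 * (knorm (g k)) ^ 2 := hlow
        _ ≤ 2 * K ^ 2 := hp1
        _ ≤ 2 * (C ^ 2 * ((r:ℝ)) ^ (2 / p)) := by linarith
        _ = 2 * C ^ 2 * ((r:ℝ)) ^ (2 / p) := by ring
    have hsplitpow : (r:ℝ) = ((r:ℝ)) ^ (2 / p) * ((r:ℝ)) ^ (1 - 2 / p) := by
      rw [← Real.rpow_add hr0]
      norm_num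
    have hu : (0:ℝ) < ((r:ℝ)) ^ (2 / p) := Real.rpow_pos_of_pos hr0 _
    have hmain2 : ε ^ 2 * (((r:ℝ)) ^ (2 / p) * ((r:ℝ)) ^ (1 - 2 / p)) ≤
        2 * C ^ 2 * ((r:ℝ)) ^ (2 / p) := by
      rw [← hsplitpow]
      exact hmain
    have : ε ^ 2 * ((r:ℝ)) ^ (1 - 2 / p) * ((r:ℝ)) ^ (2 / p) ≤
        2 * C ^ 2 * ((r:ℝ)) ^ (2 / p) := by
      calc ε ^ 2 * ((r:ℝ)) ^ (1 - 2 / p) * ((r:ℝ)) ^ (2 / p)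
          = ε ^ 2 * (((r:ℝ)) ^ (2 / p) * ((r:ℝ)) ^ (1 - 2 / p)) := by ring
        _ ≤ 2 * C ^ 2 * ((r:ℝ)) ^ (2 / p) := hmain2
    exact le_of_mul_le_mul_right this hu
  have hexp : (0:ℝ) < 1 - 2 / p := by
    have h1 : 2 / p < 1 := (div_lt_one (by linarith)).2 hp
    linarith
  have htt : Filter.Tendsto (fun r : ℕ => ((r:ℝ)) ^ (1 - 2 / p)) Filter.atTop Filter.atTop :=
    (tendsto_rpow_atTop hexp).comp tendsto_natCast_atTop_atTop
  have hev := (htt.eventually_ge_atTop (2 * C ^ 2 / ε ^ 2 + 1)).and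
    (Filter.eventually_ge_atTop 1)
  obtain ⟨r, hr1, hr2⟩ := hev.exists
  have hm := master r hr2
  have hε2 : (0:ℝ) < ε ^ 2 := by positivity
  have hgrow : ε ^ 2 * (2 * C ^ 2 / ε ^ 2 + 1) ≤ ε ^ 2 * ((r:ℝ)) ^ (1 - 2 / p) :=
    mul_le_mul_of_nonneg_left hr1 hε2.le
  have heq : ε ^ 2 * (2 * C ^ 2 / ε ^ 2 + 1) = 2 * C ^ 2 + ε ^ 2 := by
    field_simp
  linarith
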